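/- Among all real trigonometric polynomials η of degree at most f_c with sup norm at most 1 on the torus ℝ/ℤ, the maximum of η(h/2) - η(-h/2), for fixed 0 < h < 1/(2 f_c), is attained uniquely by η*(t) = sin(2π f_c t). -/

import Mathlib

open Real Polynomial Finset

lemma degree_U_le (m : ℕ) : (Polynomial.Chebyshev.U ℝ (m:ℤ)).degree ≤ m := by
  induction m using Nat.strong_induction_on with
  | _ m ih =>
    match m with
    | 0 => simp [Polynomial.Chebyshev.U_zero]
    | 1 =>
      rw [show ((1:ℕ):ℤ) = 1 by norm_num, Polynomial.Chebyshev.U_one]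
      compute_degree
      norm_num
    | (m+2) =>
      have h1 : (2*X : ℝ[X]).degree ≤ 1 := by compute_degree
      have h2 : (Polynomial.Chebyshev.U ℝ ((m:ℤ)+1)).degree ≤ ((m+1 : ℕ) : WithBot ℕ) := by
        have := ih (m+1) (by omega)
        rwa [show (((m+1:ℕ)):ℤ) = (m:ℤ)+1 by push_cast; ring] at this
      have h3 := ih m (by omega)
      rw [show ((m+2:ℕ):ℤ) = (m:ℤ)+2 by push_cast; ring, Polynomial.Chebyshev.U_add_two]
      refine (degree_sub_le _ _).trans (max_le ((degree_mul_le _ _).trans ?_)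
        (h3.trans (Nat.cast_le.mpr (by omega))))
      calc (2*X : ℝ[X]).degree + (Polynomial.Chebyshev.U ℝ ((m:ℤ)+1)).degree
          ≤ 1 + ((m+1:ℕ) : WithBot ℕ) := add_le_add h1 h2
        _ = ((m+2:ℕ) : WithBot ℕ) := by norm_cast; omega

lemma cos_sum_zero (n : ℕ) (hn : 1 ≤ n) (m : ℕ) (hm0 : 0 < m) (hm : m < 2*n) :
    ∑ k ∈ Finset.range n, Real.cos (m * ((2*k+1) * π / (2*n))) = 0 := by
  have hπ := Real.pi_pos
  have hn' : (0:ℝ) < n := by exact_mod_cast hn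
  have hm' : (0:ℝ) < m := by exact_mod_cast hm0
  have hm2 : (m:ℝ) < 2*n := by exact_mod_cast hm
  set d : ℝ := m * π / n with hd
  have hs : (0:ℝ) < Real.sin (d/2) := by
    apply Real.sin_pos_of_pos_of_lt_pi
    · positivity
    · rw [hd, div_div, div_lt_iff₀ (by positivity)]
      nlinarith
  have key : ∀ k : ℕ, Real.cos (m * ((2*k+1) * π / (2*n)))
      = (Real.sin ((k+1)*d) - Real.sin (k*d)) / (2 * Real.sin (d/2)) := by
    intro k
    have h2 : Real.sin ((k+1)*d) - Real.sin (k*d)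
        = 2 * Real.sin (d/2) * Real.cos (m * ((2*k+1)*π/(2*n))) := by
      rw [Real.sin_sub_sin]
      congr 2
      · ring
      · rw [hd]; field_simp; ring
    rw [h2]
    field_simp
  rw [Finset.sum_congr rfl (fun k _ => key k), ← Finset.sum_div]
  have tele : ∑ k ∈ Finset.range n, (Real.sin ((k+1)*d) - Real.sin (k*d))
      = Real.sin (n*d) - Real.sin (0*d) := by
    have := Finset.sum_range_sub (f := fun k : ℕ => Real.sin (k*d)) n
    simpa using this
  rw [tele, hd]
  rw [show (n:ℝ) * (m*π/n) = m*π by field_simp]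
  rw [Real.sin_nat_mul_pi]
  simp



lemma pair_sum' (n : ℕ) (hn : 1 ≤ n) (j j' : ℕ) (hjn : j ≤ n) (hj'1 : 1 ≤ j')
    (hlt : j' < j) :
    ∑ k ∈ Finset.range n, Real.sin (j * ((2*k+1)*π/(2*n))) * Real.sin (j' * ((2*k+1)*π/(2*n))) = 0 := by
  have key : ∀ k : ℕ, Real.sin (j * ((2*k+1)*π/(2*n))) * Real.sin (j' * ((2*k+1)*π/(2*n)))
      = (Real.cos ((j-j' : ℕ) * ((2*k+1)*π/(2*n))) - Real.cos ((j+j' : ℕ) * ((2*k+1)*π/(2*n)))) / 2 := by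
    intro k
    set θ : ℝ := (2*k+1)*π/(2*n)
    rw [Real.cos_sub_cos]
    have e1 : (((j-j':ℕ):ℝ) * θ + ((j+j':ℕ):ℝ) * θ) / 2 = j * θ := by
      have : ((j-j':ℕ):ℝ) = (j:ℝ) - j' := by
        push_cast [Nat.cast_sub hlt.le]; ring
      rw [this]; push_cast; ring
    have e2 : (((j-j':ℕ):ℝ) * θ - ((j+j':ℕ):ℝ) * θ) / 2 = -(j' * θ) := by
      have : ((j-j':ℕ):ℝ) = (j:ℝ) - j' := by
        push_cast [Nat.cast_sub hlt.le]; ring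
      rw [this]; push_cast; ring
    rw [e1, e2, Real.sin_neg]
    ring
  rw [Finset.sum_congr rfl (fun k _ => key k), ← Finset.sum_div, Finset.sum_sub_distrib]
  rw [cos_sum_zero n hn (j-j') (by omega) (by omega),
      cos_sum_zero n hn (j+j') (by omega) (by omega)]
  norm_num

lemma pair_sum (n : ℕ) (hn : 1 ≤ n) (j j' : ℕ) (hj1 : 1 ≤ j) (hjn : j ≤ n)
    (hj'1 : 1 ≤ j') (hj'n : j' ≤ n) (hne : j ≠ j') :
    ∑ k ∈ Finset.range n, Real.sin (j * ((2*k+1)*π/(2*n))) * Real.sin (j' * ((2*k+1)*π/(2*n))) = 0 := by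
  rcases lt_or_gt_of_ne hne with hlt | hlt
  · rw [Finset.sum_congr rfl (fun k _ => mul_comm _ _)]
    exact pair_sum' n hn j' j hj'n hj1 hlt
  · exact pair_sum' n hn j j' hjn hj'1 hlt

lemma dst_inj (n : ℕ) (hn : 1 ≤ n) (r : ℕ → ℝ)
    (hr : ∀ k, k < n → ∑ j ∈ Finset.Icc 1 n, r j * Real.sin (j * ((2*k+1)*π/(2*n))) = 0) :
    ∀ j ∈ Finset.Icc 1 n, r j = 0 := by
  intro j0 hj0
  rw [Finset.mem_Icc] at hj0
  have hπ := Real.pi_pos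
  have hn' : (0:ℝ) < n := by exact_mod_cast hn
  have hpos : 0 < ∑ k ∈ Finset.range n, Real.sin (j0 * ((2*k+1)*π/(2*n)))^2 := by
    apply Finset.sum_pos' (fun k _ => sq_nonneg _)
    refine ⟨0, Finset.mem_range.mpr (by omega), ?_⟩
    have h1 : (0:ℝ) < j0 * ((2*(0:ℕ)+1)*π/(2*n)) := by
      have : (0:ℝ) < (j0:ℝ) := by exact_mod_cast hj0.1
      positivity
    have h2 : (j0:ℝ) * ((2*(0:ℕ)+1)*π/(2*n)) < π := by
      push_cast
      rw [show ((2:ℝ)*0+1)*π/(2*n) = π/(2*n) by ring, mul_div_assoc', div_lt_iff₀ (by positivity)]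
      have : (j0:ℝ) ≤ n := by exact_mod_cast hj0.2
      nlinarith
    exact pow_pos (Real.sin_pos_of_pos_of_lt_pi h1 h2) 2
  have h0 : ∑ k ∈ Finset.range n,
      Real.sin (j0 * ((2*k+1)*π/(2*n))) * (∑ j ∈ Finset.Icc 1 n, r j * Real.sin (j * ((2*k+1)*π/(2*n)))) = 0 :=
    Finset.sum_eq_zero (fun k hk => by rw [hr k (Finset.mem_range.mp hk), mul_zero])
  have h1 : ∑ k ∈ Finset.range n,
      Real.sin (j0 * ((2*k+1)*π/(2*n))) * (∑ j ∈ Finset.Icc 1 n, r j * Real.sin (j * ((2*k+1)*π/(2*n))))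
      = r j0 * ∑ k ∈ Finset.range n, Real.sin (j0 * ((2*k+1)*π/(2*n)))^2 := by
    simp_rw [Finset.mul_sum]
    rw [Finset.sum_comm]
    rw [Finset.sum_eq_single j0]
    · exact Finset.sum_congr rfl (fun k _ => by ring)

    · intro j hj hne
      rw [Finset.mem_Icc] at hj
      have := pair_sum n hn j j0 hj.1 hj.2 hj0.1 hj0.2 hne
      calc ∑ k ∈ Finset.range n, Real.sin (j0 * ((2*k+1)*π/(2*n))) * (r j * Real.sin (j * ((2*k+1)*π/(2*n))))
          = r j * ∑ k ∈ Finset.range n, Real.sin (j * ((2*k+1)*π/(2*n))) * Real.sin (j0 * ((2*k+1)*π/(2*n))) := by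
            rw [Finset.mul_sum]; exact Finset.sum_congr rfl (fun k _ => by ring)
        _ = 0 := by rw [this, mul_zero]
    · intro hmem
      exact absurd (Finset.mem_Icc.mpr hj0) hmem
  have := h1 ▸ h0
  rcases mul_eq_zero.mp this with h | h
  · exact h
  · exact absurd h (ne_of_gt hpos)



lemma sin_n_theta (n : ℕ) (hn : 1 ≤ n) (k : ℕ) :
    Real.sin ((n:ℝ) * ((2*k+1)*π/(2*n))) = (-1)^k := by
  have hn' : (n:ℝ) ≠ 0 := by positivity
  rw [show (n:ℝ) * ((2*k+1)*π/(2*n)) = π/2 + k*π by field_simp; ring]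
  rw [Real.sin_add_nat_mul_pi, Real.sin_pi_div_two, mul_one]

lemma cos_n_theta (n : ℕ) (hn : 1 ≤ n) (k : ℕ) :
    Real.cos ((n:ℝ) * ((2*k+1)*π/(2*n))) = 0 := by
  have hn' : (n:ℝ) ≠ 0 := by positivity
  rw [show (n:ℝ) * ((2*k+1)*π/(2*n)) = π/2 + k*π by field_simp; ring]
  rw [Real.cos_add_nat_mul_pi, Real.cos_pi_div_two, mul_zero]

section Key
variable (n : ℕ)

noncomputable def θf (n : ℕ) (k : ℕ) : ℝ := (2*k+1)*π/(2*n)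
noncomputable def vf (n : ℕ) (k : ℕ) : ℝ := Real.cos (θf n k)

lemma θf_pos (hn : 1 ≤ n) (k : ℕ) : 0 < θf n k := by
  have hn' : (0:ℝ) < n := by exact_mod_cast hn
  have := Real.pi_pos
  unfold θf; positivity

lemma θf_lt_pi (hn : 1 ≤ n) {k : ℕ} (hk : k < n) : θf n k < π := by
  have hn' : (0:ℝ) < n := by exact_mod_cast hn
  have hπ := Real.pi_pos
  unfold θf
  rw [div_lt_iff₀ (by positivity)]
  have : (k:ℝ) ≤ n - 1 := by
    have : (k:ℝ) + 1 ≤ n := by exact_mod_cast hk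
    linarith
  nlinarith

lemma θf_mono (hn : 1 ≤ n) {k k' : ℕ} (hkk : k < k') : θf n k < θf n k' := by
  have hn' : (0:ℝ) < n := by exact_mod_cast hn
  have hπ := Real.pi_pos
  unfold θf
  have hkk' : (k:ℝ) < k' := by exact_mod_cast hkk
  apply div_lt_div_of_pos_right ?_ (by positivity)
  nlinarith


lemma vf_anti (hn : 1 ≤ n) {k k' : ℕ} (hkk : k < k') (hk' : k' < n) : vf n k' < vf n k := by
  unfold vf
  exact Real.cos_lt_cos_of_nonneg_of_le_pi (θf_pos n hn k).le (θf_lt_pi n hn hk').le (θf_mono n hn hkk)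

lemma vf_inj (hn : 1 ≤ n) : Set.InjOn (vf n) (Finset.range n) := by
  intro i hi j hj hij
  simp only [Finset.coe_range, Set.mem_Iio] at hi hj
  by_contra hne
  rcases lt_or_gt_of_ne hne with hh | hh
  · exact absurd hij (ne_of_gt (vf_anti n hn hh hj))
  · exact absurd hij (ne_of_lt (vf_anti n hn hh hi))

lemma key (hn : 1 ≤ n) (φ : ℝ) (hφ0 : 0 < φ) (hφ1 : φ < π/(2*n)) (b : ℕ → ℝ)
    (hb : ∀ θ : ℝ, |∑ j ∈ Finset.Icc 1 n, b j * Real.sin (j*θ)| ≤ 1) :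
    (∑ j ∈ Finset.Icc 1 n, b j * Real.sin (j*φ)) ≤ Real.sin (n*φ) ∧
    ((∑ j ∈ Finset.Icc 1 n, b j * Real.sin (j*φ)) = Real.sin (n*φ) →
      ∀ k < n, (∑ j ∈ Finset.Icc 1 n, b j * Real.sin (j*(θf n k))) = (-1)^k) := by
  have hπ := Real.pi_pos
  have hn' : (0:ℝ) < n := by exact_mod_cast hn
  have h1n : (1:ℝ) ≤ n := by exact_mod_cast hn
  have hφπ : φ < π := lt_trans hφ1 (by rw [div_lt_iff₀ (by positivity)]; nlinarith)
  have hsφ : 0 < Real.sin φ := Real.sin_pos_of_pos_of_lt_pi hφ0 hφπ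
  have hφθ : ∀ k < n, φ < θf n k := by
    intro k hk
    refine lt_of_lt_of_le hφ1 ?_
    unfold θf
    gcongr
    have : (0:ℝ) ≤ (k:ℝ) := by positivity
    nlinarith
  have hsθ : ∀ k < n, 0 < Real.sin (θf n k) :=
    fun k hk => Real.sin_pos_of_pos_of_lt_pi (θf_pos n hn k) (θf_lt_pi n hn hk)
  set c : ℝ := Real.cos φ with hc
  have hcv : ∀ k < n, vf n k < c := by
    intro k hk
    exact Real.cos_lt_cos_of_nonneg_of_le_pi hφ0.le (θf_lt_pi n hn hk).le (hφθ k hk)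
  -- the weights
  set μ : ℕ → ℝ := fun k => (Real.sin φ / Real.sin (θf n k)) *
      ∏ i ∈ (Finset.range n).erase k, ((c - vf n i)/(vf n k - vf n i)) with hμ
  have hBk : ∀ k ∈ Finset.range n, Polynomial.eval c (Lagrange.basis (Finset.range n) (vf n) k)
      = ∏ i ∈ (Finset.range n).erase k, ((c - vf n i)/(vf n k - vf n i)) := by
    intro k hk
    rw [Lagrange.basis, Polynomial.eval_prod]
    refine Finset.prod_congr rfl (fun i hi => ?_)
    rw [Lagrange.basisDivisor]
    simp only [Polynomial.eval_mul, Polynomial.eval_sub, Polynomial.eval_C, Polynomial.eval_X]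
    ring
  have hinj := vf_inj n hn
  have claimA : ∀ j ∈ Finset.Icc 1 n,
      ∑ k ∈ Finset.range n, μ k * Real.sin (j * θf n k) = Real.sin (j*φ) := by
    intro j hj
    rw [Finset.mem_Icc] at hj
    set p : Polynomial ℝ := Polynomial.Chebyshev.U ℝ ((j-1 : ℕ) : ℤ) with hp
    have hdeg : p.degree < (#(Finset.range n) : WithBot ℕ) := by
      rw [Finset.card_range]
      exact lt_of_le_of_lt (degree_U_le (j-1)) (Nat.cast_lt.mpr (by omega))
    have hinterp := Lagrange.eq_interpolate (s := Finset.range n) (v := vf n) hinj hdeg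
    have heval := congrArg (Polynomial.eval c) hinterp
    rw [Lagrange.interpolate_apply, Polynomial.eval_finset_sum] at heval
    simp_rw [Polynomial.eval_mul, Polynomial.eval_C] at heval
    have hUeval : ∀ θ : ℝ, Polynomial.eval (Real.cos θ) p * Real.sin θ = Real.sin (j * θ) := by
      intro θ
      have h := Polynomial.Chebyshev.U_real_cos θ ((j-1:ℕ):ℤ)
      rwa [show ((((j-1:ℕ):ℤ):ℝ) + 1) * θ = (j:ℝ) * θ by
        push_cast [Nat.cast_sub hj.1]; ring] at h
    calc ∑ k ∈ Finset.range n, μ k * Real.sin (j * θf n k)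
        = ∑ k ∈ Finset.range n, Polynomial.eval (vf n k) p *
            Polynomial.eval c (Lagrange.basis (Finset.range n) (vf n) k) * Real.sin φ := by
          refine Finset.sum_congr rfl (fun k hk => ?_)
          rw [hBk k hk, hμ]
          have h1 : Real.sin (j * θf n k) = Polynomial.eval (vf n k) p * Real.sin (θf n k) :=
            (hUeval (θf n k)).symm
          rw [h1]
          have h2 : Real.sin (θf n k) ≠ 0 := (hsθ k (Finset.mem_range.mp hk)).ne'
          field_simp
      _ = Real.sin (j*φ) := by
          rw [← Finset.sum_mul, ← heval]
          have := hUeval φ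
          rw [← hc] at this
          exact this
  have claimB : ∀ k < n, 0 < (-1:ℝ)^k * μ k := by
    intro k hk
    have hN : 0 < ∏ i ∈ (Finset.range n).erase k, (c - vf n i) :=
      Finset.prod_pos fun i hi =>
        sub_pos.mpr (hcv i (Finset.mem_range.mp (Finset.mem_of_mem_erase hi)))
    have hsplit : (Finset.range n).erase k = Finset.range k ∪ Finset.Ico (k+1) n := by
      ext i
      simp only [Finset.mem_erase, Finset.mem_range, Finset.mem_union, Finset.mem_Ico]
      omega
    have hdisj : Disjoint (Finset.range k) (Finset.Ico (k+1) n) :=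
      Finset.disjoint_left.mpr fun i hi hi' => by
        simp only [Finset.mem_range] at hi
        simp only [Finset.mem_Ico] at hi'
        omega
    have hP1 : 0 < ∏ i ∈ Finset.range k, (vf n i - vf n k) :=
      Finset.prod_pos fun i hi => sub_pos.mpr (vf_anti n hn (Finset.mem_range.mp hi) hk)
    have hP2 : 0 < ∏ i ∈ Finset.Ico (k+1) n, (vf n k - vf n i) :=
      Finset.prod_pos fun i hi => by
        have := Finset.mem_Ico.mp hi
        exact sub_pos.mpr (vf_anti n hn (by omega) this.2)
    have hden : ∏ i ∈ (Finset.range n).erase k, (vf n k - vf n i)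
        = (-1:ℝ)^k * ((∏ i ∈ Finset.range k, (vf n i - vf n k)) *
            ∏ i ∈ Finset.Ico (k+1) n, (vf n k - vf n i)) := by
      rw [hsplit, Finset.prod_union hdisj]
      have : ∀ i ∈ Finset.range k, vf n k - vf n i = (-1) * (vf n i - vf n k) :=
        fun i _ => by ring
      rw [Finset.prod_congr rfl this, Finset.prod_mul_distrib, Finset.prod_const,
        Finset.card_range]
      ring
    have hsig : ∀ X D : ℝ, (-1:ℝ)^k * (X / ((-1:ℝ)^k * D)) = X / D := by
      intro X D
      rcases Nat.even_or_odd k with he | ho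
      · rw [he.neg_one_pow]; ring
      · rw [ho.neg_one_pow]; ring
    have hμk : μ k = Real.sin φ / Real.sin (θf n k) *
        ((∏ i ∈ (Finset.range n).erase k, (c - vf n i)) /
          ((-1:ℝ)^k * ((∏ i ∈ Finset.range k, (vf n i - vf n k)) *
            ∏ i ∈ Finset.Ico (k+1) n, (vf n k - vf n i)))) := by
      rw [hμ]
      simp only
      rw [Finset.prod_div_distrib, hden]
    rw [hμk]
    have hrw := hsig (∏ i ∈ (Finset.range n).erase k, (c - vf n i))
      ((∏ i ∈ Finset.range k, (vf n i - vf n k)) * ∏ i ∈ Finset.Ico (k+1) n, (vf n k - vf n i))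
    calc (0:ℝ) < Real.sin φ / Real.sin (θf n k) *
          ((∏ i ∈ (Finset.range n).erase k, (c - vf n i)) /
            ((∏ i ∈ Finset.range k, (vf n i - vf n k)) *
              ∏ i ∈ Finset.Ico (k+1) n, (vf n k - vf n i))) :=
          mul_pos (div_pos hsφ (hsθ k hk)) (div_pos hN (mul_pos hP1 hP2))
      _ = Real.sin φ / Real.sin (θf n k) *
          ((-1:ℝ)^k * ((∏ i ∈ (Finset.range n).erase k, (c - vf n i)) /
            ((-1:ℝ)^k * ((∏ i ∈ Finset.range k, (vf n i - vf n k)) *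
              ∏ i ∈ Finset.Ico (k+1) n, (vf n k - vf n i))))) := by rw [hrw]
      _ = (-1:ℝ)^k * (Real.sin φ / Real.sin (θf n k) *
          ((∏ i ∈ (Finset.range n).erase k, (c - vf n i)) /
            ((-1:ℝ)^k * ((∏ i ∈ Finset.range k, (vf n i - vf n k)) *
              ∏ i ∈ Finset.Ico (k+1) n, (vf n k - vf n i))))) := by ring
  set G : ℕ → ℝ := fun k => ∑ j ∈ Finset.Icc 1 n, b j * Real.sin (j * θf n k) with hG
  have hsq : ∀ k : ℕ, ((-1:ℝ)^k)*((-1:ℝ)^k) = 1 := fun k => by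
    rw [← pow_add]; exact Even.neg_one_pow ⟨k, rfl⟩
  have hμG : ∀ k : ℕ, ((-1:ℝ)^k * μ k) * ((-1:ℝ)^k * G k) = μ k * G k := fun k => by
    calc ((-1:ℝ)^k * μ k) * ((-1:ℝ)^k * G k)
        = (((-1:ℝ)^k)*((-1:ℝ)^k)) * (μ k * G k) := by ring
      _ = μ k * G k := by rw [hsq k, one_mul]
  have hstep1 : (∑ j ∈ Finset.Icc 1 n, b j * Real.sin (j*φ))
      = ∑ k ∈ Finset.range n, μ k * G k := by
    calc ∑ j ∈ Finset.Icc 1 n, b j * Real.sin (j*φ)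
        = ∑ j ∈ Finset.Icc 1 n, b j * ∑ k ∈ Finset.range n, μ k * Real.sin (j * θf n k) :=
          Finset.sum_congr rfl fun j hj => by rw [claimA j hj]
      _ = ∑ k ∈ Finset.range n, μ k * G k := by
          simp_rw [hG, Finset.mul_sum]
          rw [Finset.sum_comm]
          exact Finset.sum_congr rfl fun k _ => Finset.sum_congr rfl fun j _ => by ring
  have hGle : ∀ k < n, (-1:ℝ)^k * G k ≤ 1 := by
    intro k hk
    have habs := hb (θf n k)
    calc (-1:ℝ)^k * G k ≤ |G k| := by
          rcases Nat.even_or_odd k with he | ho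
          · rw [he.neg_one_pow, one_mul]; exact le_abs_self _
          · rw [ho.neg_one_pow, neg_one_mul]; exact neg_le_abs _
      _ ≤ 1 := habs
  have hstep3 : ∑ k ∈ Finset.range n, (-1:ℝ)^k * μ k = Real.sin (n*φ) := by
    have hA := claimA n (Finset.mem_Icc.mpr ⟨hn, le_refl n⟩)
    rw [← hA]
    refine Finset.sum_congr rfl fun k hk => ?_
    have : Real.sin ((n:ℝ) * θf n k) = (-1:ℝ)^k := by
      unfold θf
      exact sin_n_theta n hn k
    rw [this]
    ring
  constructor
  · rw [hstep1, ← hstep3]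
    refine Finset.sum_le_sum fun k hk => ?_
    have hk' := Finset.mem_range.mp hk
    calc μ k * G k = ((-1:ℝ)^k * μ k) * ((-1:ℝ)^k * G k) := (hμG k).symm
      _ ≤ ((-1:ℝ)^k * μ k) * 1 :=
          mul_le_mul_of_nonneg_left (hGle k hk') (claimB k hk').le
      _ = (-1:ℝ)^k * μ k := mul_one _
  · intro heq k hk
    have hzero : ∑ k ∈ Finset.range n, ((-1:ℝ)^k * μ k) * (1 - (-1:ℝ)^k * G k) = 0 := by
      have hexp : ∑ k ∈ Finset.range n, ((-1:ℝ)^k * μ k) * (1 - (-1:ℝ)^k * G k)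
          = (∑ k ∈ Finset.range n, (-1:ℝ)^k * μ k) - ∑ k ∈ Finset.range n, μ k * G k := by
        rw [← Finset.sum_sub_distrib]
        exact Finset.sum_congr rfl fun k _ => by rw [mul_sub, mul_one, hμG k]
      rw [hexp, hstep3, ← hstep1, heq, sub_self]
    have hnneg : ∀ k ∈ Finset.range n, 0 ≤ ((-1:ℝ)^k * μ k) * (1 - (-1:ℝ)^k * G k) :=
      fun k hk => mul_nonneg (claimB k (Finset.mem_range.mp hk)).le
        (by linarith [hGle k (Finset.mem_range.mp hk)])
    have hterm := (Finset.sum_eq_zero_iff_of_nonneg hnneg).mp hzero k (Finset.mem_range.mpr hk)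
    have hμpos := claimB k hk
    have h1 : 1 - (-1:ℝ)^k * G k = 0 := by
      rcases mul_eq_zero.mp hterm with hcon | hok
      · exact absurd hcon hμpos.ne'
      · exact hok
    have h2 : (-1:ℝ)^k * G k = 1 := by linarith
    calc G k = (((-1:ℝ)^k)*((-1:ℝ)^k)) * G k := by rw [hsq k, one_mul]
      _ = (-1:ℝ)^k * ((-1:ℝ)^k * G k) := by ring
      _ = (-1:ℝ)^k := by rw [h2, mul_one]

theorem dual_certificate_unique_max
    (fc : ℕ) (hfc : 1 ≤ fc) (h : ℝ) (hh0 : 0 < h) (hh1 : h < 1 / (2 * fc))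
    (a b : ℕ → ℝ) (η : ℝ → ℝ)
    (hη : ∀ t, η t = a 0 + ∑ j ∈ Finset.Icc 1 fc,
      (a j * Real.cos (2 * π * j * t) + b j * Real.sin (2 * π * j * t)))
    (hbound : ∀ t, |η t| ≤ 1) :
    η (h / 2) - η (-(h / 2)) ≤ 2 * Real.sin (π * fc * h) ∧
    (η (h / 2) - η (-(h / 2)) = 2 * Real.sin (π * fc * h) →
      ∀ t, η t = Real.sin (2 * π * fc * t)) := by
  have hπ := Real.pi_pos
  have hn' : (0:ℝ) < fc := by exact_mod_cast hfc
  have harg : ∀ (j : ℕ) (θ : ℝ), 2*π*(j:ℝ)*(θ/(2*π)) = j*θ := by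
    intro j θ; field_simp
  have hgb : ∀ θ : ℝ, η (θ/(2*π)) - η (-(θ/(2*π)))
      = 2 * ∑ j ∈ Finset.Icc 1 fc, b j * Real.sin (j*θ) := by
    intro θ
    rw [hη, hη]
    simp only [mul_neg, Real.cos_neg, Real.sin_neg, harg]
    rw [Finset.mul_sum]
    rw [show ∀ A S1 S2 : ℝ, A + S1 - (A + S2) = S1 - S2 from fun _ _ _ => by ring,
      ← Finset.sum_sub_distrib]
    exact Finset.sum_congr rfl fun j _ => by ring
  have habs : ∀ θ : ℝ, |∑ j ∈ Finset.Icc 1 fc, b j * Real.sin (j*θ)| ≤ 1 := by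
    intro θ
    have hx := abs_le.mp (hbound (θ/(2*π)))
    have hy := abs_le.mp (hbound (-(θ/(2*π))))
    have hg := hgb θ
    rw [abs_le]
    constructor <;> nlinarith [hx.1, hx.2, hy.1, hy.2]
  have hφ1 : π*h < π/(2*fc) := by
    rw [lt_div_iff₀ (by positivity)]
    calc π*h*(2*fc) = (2*fc)*h*π := by ring
      _ < 1*π := by
          apply mul_lt_mul_of_pos_right _ hπ
          rw [← lt_div_iff₀' (by positivity)]
          simpa using hh1
      _ = π := one_mul π
  have hkey := key fc hfc (π*h) (by positivity) hφ1 b habs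
  have hval : η (h/2) - η (-(h/2)) = 2 * ∑ j ∈ Finset.Icc 1 fc, b j * Real.sin (j*(π*h)) := by
    have := hgb (π*h)
    rw [show π*h/(2*π) = h/2 by field_simp] at this
    exact this
  have hsin : Real.sin ((fc:ℝ)*(π*h)) = Real.sin (π*fc*h) := by congr 1; ring
  constructor
  · rw [hval]
    have := hkey.1
    rw [hsin] at this
    linarith
  · intro heq t
    have hGk : ∀ k < fc, (∑ j ∈ Finset.Icc 1 fc, b j * Real.sin (j*(θf fc k))) = (-1)^k := by
      apply hkey.2
      rw [hsin]
      rw [hval] at heq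
      linarith
    have hbval : ∀ j ∈ Finset.Icc 1 fc, b j = (if j = fc then (1:ℝ) else 0) := by
      have hr : ∀ k, k < fc → ∑ j ∈ Finset.Icc 1 fc,
          (b j - (if j = fc then (1:ℝ) else 0)) * Real.sin (j * ((2*k+1)*π/(2*fc))) = 0 := by
        intro k hk
        have hG := hGk k hk
        unfold θf at hG
        have hsplit : ∑ j ∈ Finset.Icc 1 fc,
            (b j - (if j = fc then (1:ℝ) else 0)) * Real.sin (j * ((2*k+1)*π/(2*fc)))
            = (∑ j ∈ Finset.Icc 1 fc, b j * Real.sin (j * ((2*k+1)*π/(2*fc))))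
              - ∑ j ∈ Finset.Icc 1 fc, (if j = fc then (1:ℝ) else 0) * Real.sin (j * ((2*k+1)*π/(2*fc))) := by
          rw [← Finset.sum_sub_distrib]
          exact Finset.sum_congr rfl fun j _ => by ring
        have hite : ∑ j ∈ Finset.Icc 1 fc,
            (if j = fc then (1:ℝ) else 0) * Real.sin (j * ((2*k+1)*π/(2*fc)))
            = Real.sin (fc * ((2*k+1)*π/(2*fc))) := by
          have hcongr : ∀ j ∈ Finset.Icc 1 fc,
              (if j = fc then (1:ℝ) else 0) * Real.sin (j * ((2*k+1)*π/(2*fc)))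
              = if j = fc then Real.sin (fc * ((2*k+1)*π/(2*fc))) else 0 := by
            intro j _
            split
            · next hj => subst hj; rw [one_mul]
            · rw [zero_mul]
          rw [Finset.sum_congr rfl hcongr, Finset.sum_ite_eq' (Finset.Icc 1 fc) fc]
          simp [Finset.mem_Icc, hfc]
        rw [hsplit, hG, hite, sin_n_theta fc hfc k, sub_self]
      intro j hj
      exact sub_eq_zero.mp (dst_inj fc hfc _ hr j hj)
    have hnodes : ∀ k < fc, η (θf fc k/(2*π)) = (-1)^k ∧ η (-(θf fc k/(2*π))) = -((-1:ℝ)^k) := by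
      intro k hk
      have hg := hgb (θf fc k)
      rw [hGk k hk] at hg
      have hx := abs_le.mp (hbound (θf fc k/(2*π)))
      have hy := abs_le.mp (hbound (-(θf fc k/(2*π))))
      rcases Nat.even_or_odd k with he | ho
      · rw [he.neg_one_pow] at hg ⊢
        constructor <;> linarith [hx.1, hx.2, hy.1, hy.2]
      · rw [ho.neg_one_pow] at hg ⊢
        constructor <;> linarith [hx.1, hx.2, hy.1, hy.2]
    have hD : ∀ u : ℝ, HasDerivAt η (∑ j ∈ Finset.Icc 1 fc,
        (a j * (-Real.sin (2*π*j*u) * (2*π*j)) + b j * (Real.cos (2*π*j*u) * (2*π*j)))) u := by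
      intro u
      have hηf : η = fun w => a 0 + ∑ j ∈ Finset.Icc 1 fc,
          (a j * Real.cos (2*π*j*w) + b j * Real.sin (2*π*j*w)) := funext hη
      rw [hηf]
      refine HasDerivAt.const_add _ (HasDerivAt.fun_sum fun j hj => ?_)
      have h1 : HasDerivAt (fun w : ℝ => 2*π*(j:ℝ)*w) (2*π*(j:ℝ)) u := by
        simpa using (hasDerivAt_id u).const_mul (2*π*(j:ℝ))
      exact (h1.cos.const_mul (a j)).add (h1.sin.const_mul (b j))
    have hD0 : ∀ k, k < fc → ∑ j ∈ Finset.Icc 1 fc,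
        (a j * (2*π*j)) * Real.sin (j * ((2*k+1)*π/(2*fc))) = 0 := by
      intro k hk
      have hdtk := hD (θf fc k/(2*π))
      have hDval : (∑ j ∈ Finset.Icc 1 fc,
          (a j * (-Real.sin (2*π*j*(θf fc k/(2*π))) * (2*π*j))
            + b j * (Real.cos (2*π*j*(θf fc k/(2*π))) * (2*π*j)))) = 0 := by
        rcases Nat.even_or_odd k with he | ho
        · have hmax : IsLocalMax η (θf fc k/(2*π)) := by
            apply Filter.Eventually.of_forall
            intro u
            have := abs_le.mp (hbound u)
            rw [(hnodes k hk).1, he.neg_one_pow]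
            exact this.2
          exact hmax.hasDerivAt_eq_zero hdtk
        · have hmin : IsLocalMin η (θf fc k/(2*π)) := by
            apply Filter.Eventually.of_forall
            intro u
            have := abs_le.mp (hbound u)
            rw [(hnodes k hk).1, ho.neg_one_pow]
            exact this.1
          exact hmin.hasDerivAt_eq_zero hdtk
      have harg' : ∀ j : ℕ, 2*π*(j:ℝ)*(θf fc k/(2*π)) = j*θf fc k := fun j => harg j _
      simp only [harg'] at hDval
      rw [Finset.sum_add_distrib] at hDval
      have hbpart : ∑ j ∈ Finset.Icc 1 fc, b j * (Real.cos (j*θf fc k) * (2*π*j)) = 0 := by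
        rw [Finset.sum_congr rfl (fun j hj => by rw [hbval j hj])]
        have hcongr : ∀ j ∈ Finset.Icc 1 fc,
            (if j = fc then (1:ℝ) else 0) * (Real.cos (j*θf fc k) * (2*π*j))
            = if j = fc then Real.cos ((fc:ℝ)*θf fc k) * (2*π*fc) else 0 := by
          intro j _
          split
          · next hj => subst hj; rw [one_mul]
          · rw [zero_mul]
        rw [Finset.sum_congr rfl hcongr, Finset.sum_ite_eq' (Finset.Icc 1 fc) fc]
        have : Real.cos ((fc:ℝ)*θf fc k) = 0 := by
          unfold θf; exact cos_n_theta fc hfc k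
        simp [this]
      rw [hbpart, add_zero] at hDval
      calc ∑ j ∈ Finset.Icc 1 fc, (a j * (2*π*j)) * Real.sin (j * ((2*k+1)*π/(2*fc)))
          = -∑ j ∈ Finset.Icc 1 fc, a j * (-Real.sin (j*θf fc k) * (2*π*j)) := by
            rw [← Finset.sum_neg_distrib]
            refine Finset.sum_congr rfl fun j _ => ?_
            unfold θf
            ring
        _ = 0 := by rw [hDval, neg_zero]
    have haval : ∀ j ∈ Finset.Icc 1 fc, a j = 0 := by
      have hz := dst_inj fc hfc (fun j => a j * (2*π*j)) hD0
      intro j hj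
      have h2 := hz j hj
      have hj1 : (1:ℝ) ≤ (j:ℝ) := by exact_mod_cast (Finset.mem_Icc.mp hj).1
      have hne : (2*π*(j:ℝ)) ≠ 0 := by positivity
      simpa [hne] using h2
    have ha0 : a 0 = 0 := by
      have h0 := (hnodes 0 (by omega)).1
      rw [hη] at h0
      have hsum : ∑ j ∈ Finset.Icc 1 fc,
          (a j * Real.cos (2*π*j*(θf fc 0/(2*π))) + b j * Real.sin (2*π*j*(θf fc 0/(2*π)))) = 1 := by
        rw [Finset.sum_congr rfl (fun j hj => by rw [haval j hj, hbval j hj])]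
        have hcongr : ∀ j ∈ Finset.Icc 1 fc,
            ((0:ℝ) * Real.cos (2*π*j*(θf fc 0/(2*π)))
              + (if j = fc then (1:ℝ) else 0) * Real.sin (2*π*j*(θf fc 0/(2*π))))
            = if j = fc then Real.sin (2*π*(fc:ℝ)*(θf fc 0/(2*π))) else 0 := by
          intro j _
          split
          · next hj => subst hj; ring
          · ring
        rw [Finset.sum_congr rfl hcongr, Finset.sum_ite_eq' (Finset.Icc 1 fc) fc]
        rw [if_pos (Finset.mem_Icc.mpr ⟨hfc, le_refl fc⟩)]
        rw [harg fc (θf fc 0)]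
        unfold θf
        rw [sin_n_theta fc hfc 0]
        norm_num
      rw [hsum] at h0
      simpa using h0
    rw [hη t, ha0]
    rw [Finset.sum_congr rfl (fun j hj => by rw [haval j hj, hbval j hj])]
    have hcongr : ∀ j ∈ Finset.Icc 1 fc,
        ((0:ℝ) * Real.cos (2*π*j*t) + (if j = fc then (1:ℝ) else 0) * Real.sin (2*π*j*t))
        = if j = fc then Real.sin (2*π*(fc:ℝ)*t) else 0 := by
      intro j _
      split
      · next hj => subst hj; ring
      · ring
    rw [Finset.sum_congr rfl hcongr, Finset.sum_ite_eq' (Finset.Icc 1 fc) fc]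
    rw [if_pos (Finset.mem_Icc.mpr ⟨hfc, le_refl fc⟩)]
    ring
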